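/- arXiv:2312.17265 — 2 statements merged into one kernel-verified Lean document; each statement's English description precedes it below -/
import Mathlib

section
/- Let n ≥ 1 and let f : ([0,1])^n → ℝ be a continuous function that is invariant under every permutation of its n arguments. Then there exist a continuous function ρ : ℝ^{n+1} → ℝ and the continuous map ϕ : [0,1] → ℝ^{n+1} given by ϕ(t) = (1, t, t², …, tⁿ) such that for all x ∈ [0,1]^n, f(x₁, …, xₙ) = ρ(ϕ(x₁) + ⋯ + ϕ(xₙ)). -/
open Finset

/-- Power sums determine the elementary symmetric functions (over ℝ). -/
lemma aux_esymm_eq (n : ℕ) (x y : Fin n → ℝ)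
    (h : ∀ k ≤ n, ∑ i, x i ^ k = ∑ i, y i ^ k) :
    ∀ k ≤ n, MvPolynomial.aeval x (MvPolynomial.esymm (Fin n) ℝ k) =
      MvPolynomial.aeval y (MvPolynomial.esymm (Fin n) ℝ k) := by
  intro k
  induction k using Nat.strong_induction_on with
  | _ k ih =>
    intro hkn
    rcases Nat.eq_zero_or_pos k with rfl | hk
    · simp [MvPolynomial.esymm_zero]
    · have key : ∀ z : Fin n → ℝ,
          (k : ℝ) * MvPolynomial.aeval z (MvPolynomial.esymm (Fin n) ℝ k) =
          (-1 : ℝ) ^ (k + 1) * ∑ a ∈ (antidiagonal k).filter (fun a => a.1 < k),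
            (-1 : ℝ) ^ a.1 * MvPolynomial.aeval z (MvPolynomial.esymm (Fin n) ℝ a.1) *
              ∑ i, z i ^ a.2 := by
        intro z
        have hN := congrArg (MvPolynomial.aeval z) (MvPolynomial.mul_esymm_eq_sum (Fin n) ℝ k)
        simpa [MvPolynomial.psum, map_sum, map_mul, map_pow] using hN
      have hsum : ∑ a ∈ (antidiagonal k).filter (fun a => a.1 < k),
            (-1 : ℝ) ^ a.1 * MvPolynomial.aeval x (MvPolynomial.esymm (Fin n) ℝ a.1) *
              ∑ i, x i ^ a.2 =
          ∑ a ∈ (antidiagonal k).filter (fun a => a.1 < k),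
            (-1 : ℝ) ^ a.1 * MvPolynomial.aeval y (MvPolynomial.esymm (Fin n) ℝ a.1) *
              ∑ i, y i ^ a.2 := by
        refine Finset.sum_congr rfl fun a ha => ?_
        obtain ⟨ha1, ha2⟩ := Finset.mem_filter.mp ha
        have hadd : a.1 + a.2 = k := Finset.HasAntidiagonal.mem_antidiagonal.mp ha1
        rw [ih a.1 ha2 (le_trans (le_of_lt ha2) hkn),
          h a.2 (le_trans (by omega) hkn)]
      have := (key x).trans (by rw [hsum, ← key y])
      exact mul_left_cancel₀ (by exact_mod_cast hk.ne') this

/-- Equal power sums imply equal multisets (over ℝ). -/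
lemma aux_multiset_eq (n : ℕ) (x y : Fin n → ℝ)
    (h : ∀ k ≤ n, ∑ i, x i ^ k = ∑ i, y i ^ k) :
    Multiset.map x Finset.univ.val = Multiset.map y Finset.univ.val := by
  classical
  set s := Multiset.map x Finset.univ.val with hs
  set t := Multiset.map y Finset.univ.val with ht
  have hcs : Multiset.card s = n := by simp [hs]
  have hct : Multiset.card t = n := by simp [ht]
  have hesymm : ∀ k ≤ n, s.esymm k = t.esymm k := by
    intro k hk
    have hx := MvPolynomial.aeval_esymm_eq_multiset_esymm (Fin n) ℝ k x
    have hy := MvPolynomial.aeval_esymm_eq_multiset_esymm (Fin n) ℝ k y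
    have hev := aux_esymm_eq n x y h k hk
    rw [hx, hy] at hev
    exact hev
  have hP : (s.map fun a => Polynomial.X - Polynomial.C a).prod =
      (t.map fun a => Polynomial.X - Polynomial.C a).prod := by
    ext k
    by_cases hk : k ≤ n
    · rw [Multiset.prod_X_sub_C_coeff s (by omega), Multiset.prod_X_sub_C_coeff t (by omega),
        hcs, hct, hesymm (n - k) (by omega)]
    · rw [Polynomial.coeff_eq_zero_of_natDegree_lt, Polynomial.coeff_eq_zero_of_natDegree_lt]
      · rw [Polynomial.natDegree_multiset_prod_X_sub_C_eq_card, hct]; omega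
      · rw [Polynomial.natDegree_multiset_prod_X_sub_C_eq_card, hcs]; omega
  have := congrArg Polynomial.roots hP
  rwa [Polynomial.roots_multiset_prod_X_sub_C, Polynomial.roots_multiset_prod_X_sub_C] at this

/-- Equal multisets of values give a permutation relating the tuples. -/
lemma aux_exists_perm (n : ℕ) (x y : Fin n → ℝ)
    (hme : Multiset.map x Finset.univ.val = Multiset.map y Finset.univ.val) :
    ∃ σ : Equiv.Perm (Fin n), x ∘ σ = y := by
  have hofn : ∀ z : Fin n → ℝ, Multiset.map z Finset.univ.val = ↑(List.ofFn z) := by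
    intro z
    rw [List.ofFn_eq_map]
    rfl
  have hperm : (List.ofFn x).Perm (List.ofFn y) := by
    rw [← Multiset.coe_eq_coe, ← hofn, ← hofn]
    exact hme
  have hpx : (List.ofFn (x ∘ Tuple.sort x)).Perm (List.ofFn x) :=
    Equiv.Perm.ofFn_comp_perm (Tuple.sort x) x
  have hpy : (List.ofFn (y ∘ Tuple.sort y)).Perm (List.ofFn y) :=
    Equiv.Perm.ofFn_comp_perm (Tuple.sort y) y
  have hsorted : List.ofFn (x ∘ Tuple.sort x) = List.ofFn (y ∘ Tuple.sort y) :=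
    List.Perm.eq_of_sortedLE ((Tuple.monotone_sort x).sortedLE_ofFn)
      ((Tuple.monotone_sort y).sortedLE_ofFn) (hpx.trans (hperm.trans hpy.symm))
  have heq : x ∘ Tuple.sort x = y ∘ Tuple.sort y := List.ofFn_injective hsorted
  refine ⟨(Tuple.sort y).symm.trans (Tuple.sort x), funext fun i => ?_⟩
  have := congrFun heq ((Tuple.sort y).symm i)
  simpa using this


/-- **DeepSets sum-decomposition, scalar case.** Let `n ≥ 1` and let
`f : [0,1]^n → ℝ` be continuous and invariant under every permutation of its arguments.
Then there is a continuous `ρ : ℝ^{n+1} → ℝ` such that, with the continuous map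
`ϕ : [0,1] → ℝ^{n+1}`, `ϕ t = (1, t, t², …, tⁿ)`, we have
`f x = ρ (ϕ x₁ + ⋯ + ϕ xₙ)` for all `x ∈ [0,1]^n`. -/
theorem deepsets_decomposition_scalar
    (n : ℕ) (hn : 1 ≤ n)
    (f : (Fin n → ℝ) → ℝ)
    (hf : ContinuousOn f {x : Fin n → ℝ | ∀ i, x i ∈ Set.Icc (0 : ℝ) 1})
    (hsymm : ∀ x : Fin n → ℝ, (∀ i, x i ∈ Set.Icc (0 : ℝ) 1) →
      ∀ σ : Equiv.Perm (Fin n), f (x ∘ σ) = f x)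
    (ϕ : ℝ → (Fin (n + 1) → ℝ))
    (hϕ : ∀ (t : ℝ) (k : Fin (n + 1)), ϕ t k = t ^ (k : ℕ)) :
    ∃ ρ : (Fin (n + 1) → ℝ) → ℝ, Continuous ρ ∧
      ∀ x : Fin n → ℝ, (∀ i, x i ∈ Set.Icc (0 : ℝ) 1) →
        f x = ρ (∑ i : Fin n, ϕ (x i)) := by
  classical
  set K : Set (Fin n → ℝ) := {x : Fin n → ℝ | ∀ i, x i ∈ Set.Icc (0 : ℝ) 1} with hKdef
  have hK : IsCompact K := by
    have : K = Set.pi Set.univ (fun _ : Fin n => Set.Icc (0 : ℝ) 1) := by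
      ext z
      simp [hKdef, Set.mem_pi, Set.mem_Icc, Pi.le_def, forall_and]
    rw [this]
    exact isCompact_univ_pi fun _ => isCompact_Icc
  have hϕc : Continuous ϕ := by
    have : ϕ = fun t (k : Fin (n + 1)) => t ^ (k : ℕ) := funext fun t => funext fun k => hϕ t k
    rw [this]
    exact continuous_pi fun k => continuous_pow _
  set Φ : (Fin n → ℝ) → (Fin (n + 1) → ℝ) := fun x => ∑ i, ϕ (x i) with hΦdef
  have hΦc : Continuous Φ := continuous_finset_sum _ fun i _ => hϕc.comp (continuous_apply i)
  have hfiber : ∀ x ∈ K, ∀ y ∈ K, Φ x = Φ y → f x = f y := by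
    intro x hx y hy hxy
    have hpow : ∀ k ≤ n, ∑ i, x i ^ k = ∑ i, y i ^ k := by
      intro k hk
      have h1 := congrFun hxy ⟨k, Nat.lt_succ_of_le hk⟩
      simpa [hΦdef, hϕ, Finset.sum_apply] using h1
    obtain ⟨σ, hσ⟩ := aux_exists_perm n x y (aux_multiset_eq n x y hpow)
    rw [← hσ]
    exact (hsymm x hx σ).symm
  set C : Set (Fin (n + 1) → ℝ) := Φ '' K with hCdef
  have hCcomp : IsCompact C := hK.image hΦc
  have hCclosed : IsClosed C := hCcomp.isClosed
  haveI : CompactSpace K := isCompact_iff_compactSpace.mp hK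
  set q : K → C := fun z => ⟨Φ z, ⟨z.1, z.2, rfl⟩⟩ with hqdef
  have hqc : Continuous q := Continuous.subtype_mk (hΦc.comp continuous_subtype_val) _
  have hqsurj : Function.Surjective q := by
    rintro ⟨c, z, hz, rfl⟩
    exact ⟨⟨z, hz⟩, rfl⟩
  have hquot : Topology.IsQuotientMap q := (hqc.isClosedMap).isQuotientMap hqc hqsurj
  choose sec hsec using hqsurj
  set g : C → ℝ := fun c => f (sec c) with hgdef
  have hgq : ∀ z : K, g (q z) = f z := fun z =>
    hfiber _ (sec (q z)).2 _ z.2 (congrArg Subtype.val (hsec (q z)))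
  have hgc : Continuous g := by
    rw [hquot.continuous_iff]
    have : g ∘ q = fun z : K => f z := funext hgq
    rw [this]
    exact hf.restrict
  obtain ⟨ρ, hρ⟩ := ContinuousMap.exists_restrict_eq hCclosed ⟨g, hgc⟩
  refine ⟨ρ, ρ.continuous, fun x hx => ?_⟩
  have hxK : x ∈ K := hx
  have h1 : ρ ((q ⟨x, hxK⟩ : C) : Fin (n + 1) → ℝ) = g (q ⟨x, hxK⟩) := by
    have := congrFun (congrArg DFunLike.coe hρ) (q ⟨x, hxK⟩)
    simpa using this
  have h2 : ((q ⟨x, hxK⟩ : C) : Fin (n + 1) → ℝ) = ∑ i, ϕ (x i) := rfl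
  rw [← h2, h1, hgq ⟨x, hxK⟩]
end

section
/- Let n ≥ 1 and let E : [0,1]^n → ℝ^n be the power-sum map E(x) = (Σ_i x_i, Σ_i x_i², …, Σ_i x_iⁿ). Then E is continuous and invariant under permutations of the coordinates, and the induced map from the quotient of [0,1]^n by the action of the symmetric group on coordinates (equivalently, from the space of n-element multisets of points of [0,1]) onto the image E([0,1]^n) ⊆ ℝ^n is a homeomorphism: it is a continuous bijection from a compact space onto a Hausdorff space, hence its inverse is continuous. -/
/-- The cube `[0,1]^n` inside `ℝ^n`. -/
def unitCube (n : ℕ) : Set (Fin n → ℝ) := {x | ∀ i, x i ∈ Set.Icc (0 : ℝ) 1}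

/-- The power-sum map `E x = (∑ i, x i, ∑ i, (x i)², …, ∑ i, (x i)ⁿ)`. -/
def powerSumMap (n : ℕ) (x : Fin n → ℝ) : Fin n → ℝ :=
  fun k => ∑ i : Fin n, x i ^ ((k : ℕ) + 1)

/-- The setoid on the cube identifying tuples that differ by a permutation of
coordinates; its quotient is the space of `n`-element multisets of points of `[0,1]`. -/
def permSetoid (n : ℕ) : Setoid (unitCube n) where
  r x y := ∃ σ : Equiv.Perm (Fin n), ∀ i, (y : Fin n → ℝ) i = (x : Fin n → ℝ) (σ i)
  iseqv := by
    constructor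
    · intro x
      exact ⟨1, fun i => rfl⟩
    · rintro x y ⟨σ, h⟩
      exact ⟨σ⁻¹, fun i => by rw [h (σ⁻¹ i), Equiv.Perm.inv_def, Equiv.apply_symm_apply]⟩
    · rintro x y z ⟨σ, h⟩ ⟨τ, h'⟩
      exact ⟨σ * τ, fun i => by rw [h' i, h (τ i)]; rfl⟩

section AuxPowerSum
open Finset Polynomial

/-- Newton step: elementary symmetric values are determined by power sums. -/
lemma esymm_eval_eq_of_psum_eq (n : ℕ) (x y : Fin n → ℝ)
    (hp : ∀ k, 1 ≤ k → k ≤ n → ∑ i, x i ^ k = ∑ i, y i ^ k) :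
    ∀ k, k ≤ n → MvPolynomial.eval x (MvPolynomial.esymm (Fin n) ℝ k)
      = MvPolynomial.eval y (MvPolynomial.esymm (Fin n) ℝ k) := by
  intro k
  induction k using Nat.strong_induction_on with
  | _ k ih =>
    intro hk
    rcases Nat.eq_zero_or_pos k with rfl | hkpos
    · simp [MvPolynomial.esymm_zero]
    · have hx := congrArg (MvPolynomial.eval x) (MvPolynomial.mul_esymm_eq_sum (Fin n) ℝ k)
      have hy := congrArg (MvPolynomial.eval y) (MvPolynomial.mul_esymm_eq_sum (Fin n) ℝ k)
      simp only [map_mul, map_sum, map_pow, map_neg, map_one, map_natCast] at hx hy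
      have hsum : ∑ a ∈ (antidiagonal k).filter (fun a => a.1 < k),
            MvPolynomial.eval x ((-1) ^ a.1 * MvPolynomial.esymm (Fin n) ℝ a.1
              * MvPolynomial.psum (Fin n) ℝ a.2)
          = ∑ a ∈ (antidiagonal k).filter (fun a => a.1 < k),
            MvPolynomial.eval y ((-1) ^ a.1 * MvPolynomial.esymm (Fin n) ℝ a.1
              * MvPolynomial.psum (Fin n) ℝ a.2) := by
        apply Finset.sum_congr rfl
        intro a ha
        simp only [Finset.mem_filter, Finset.HasAntidiagonal.mem_antidiagonal] at ha
        have h1 : a.2 ≥ 1 := by omega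
        have h2 : a.2 ≤ n := by omega
        have hpsum : MvPolynomial.eval x (MvPolynomial.psum (Fin n) ℝ a.2)
            = MvPolynomial.eval y (MvPolynomial.psum (Fin n) ℝ a.2) := by
          simpa [MvPolynomial.psum] using hp a.2 h1 h2
        have hesymm := ih a.1 ha.2 (le_trans (le_of_lt ha.2) hk)
        simp only [map_mul, map_pow, map_neg, map_one]
        rw [hpsum, hesymm]
      have hk' : (k : ℝ) ≠ 0 := Nat.cast_ne_zero.mpr (by omega)
      have : (k : ℝ) * MvPolynomial.eval x (MvPolynomial.esymm (Fin n) ℝ k)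
          = (k : ℝ) * MvPolynomial.eval y (MvPolynomial.esymm (Fin n) ℝ k) := by
        rw [hx, hy]
        congr 1
        simpa using hsum
      exact mul_left_cancel₀ hk' this


lemma exists_perm_of_psum_eq (n : ℕ) (x y : Fin n → ℝ)
    (hesymm : ∀ k, k ≤ n → MvPolynomial.eval x (MvPolynomial.esymm (Fin n) ℝ k)
      = MvPolynomial.eval y (MvPolynomial.esymm (Fin n) ℝ k)) :
    ∃ σ : Equiv.Perm (Fin n), ∀ i, y i = x (σ i) := by
  -- multiset esymm values agree
  have hme : ∀ k, k ≤ n → (Finset.univ.val.map x).esymm k = (Finset.univ.val.map y).esymm k := by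
    intro k hk
    have hx := MvPolynomial.aeval_esymm_eq_multiset_esymm (Fin n) ℝ k x
    have hy := MvPolynomial.aeval_esymm_eq_multiset_esymm (Fin n) ℝ k y
    rw [show (MvPolynomial.aeval x : MvPolynomial (Fin n) ℝ →ₐ[ℝ] ℝ)
        (MvPolynomial.esymm (Fin n) ℝ k) = MvPolynomial.eval x (MvPolynomial.esymm (Fin n) ℝ k)
      from by rw [← MvPolynomial.coe_aeval_eq_eval]; rfl] at hx
    rw [show (MvPolynomial.aeval y : MvPolynomial (Fin n) ℝ →ₐ[ℝ] ℝ)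
        (MvPolynomial.esymm (Fin n) ℝ k) = MvPolynomial.eval y (MvPolynomial.esymm (Fin n) ℝ k)
      from by rw [← MvPolynomial.coe_aeval_eq_eval]; rfl] at hy
    rw [← hx, ← hy]
    exact hesymm k hk
  have hcardx : Multiset.card (Finset.univ.val.map x) = n := by simp
  have hcardy : Multiset.card (Finset.univ.val.map y) = n := by simp
  -- polynomials equal
  have hpoly : ((Finset.univ.val.map x).map fun t => X - C t).prod
      = ((Finset.univ.val.map y).map fun t => X - C t).prod := by
    rw [Multiset.prod_X_sub_X_eq_sum_esymm, Multiset.prod_X_sub_X_eq_sum_esymm, hcardx, hcardy]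
    apply Finset.sum_congr rfl
    intro j hj
    rw [Finset.mem_range] at hj
    rw [hme j (by omega)]
  have hms : Finset.univ.val.map x = Finset.univ.val.map y := by
    have := congrArg Polynomial.roots hpoly
    rwa [Polynomial.roots_multiset_prod_X_sub_C, Polynomial.roots_multiset_prod_X_sub_C] at this
  -- lists perm
  rw [Fin.univ_val_map, Fin.univ_val_map, Multiset.coe_eq_coe] at hms
  have h1 : List.Perm (List.ofFn (x ∘ Tuple.sort x)) (List.ofFn (y ∘ Tuple.sort y)) :=
    ((Tuple.sort x).ofFn_comp_perm x).trans (hms.trans ((Tuple.sort y).ofFn_comp_perm y).symm)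
  have h2 : x ∘ Tuple.sort x = y ∘ Tuple.sort y :=
    List.ofFn_injective <| List.Perm.eq_of_sortedLE
      (Tuple.monotone_sort x).sortedLE_ofFn (Tuple.monotone_sort y).sortedLE_ofFn h1
  refine ⟨(Tuple.sort y).symm.trans (Tuple.sort x), fun i => ?_⟩
  have := congrFun h2 ((Tuple.sort y).symm i)
  simp only [Function.comp_apply, Equiv.apply_symm_apply] at this
  simp only [Equiv.trans_apply]
  exact this.symm

end AuxPowerSum

open Finset Polynomial in
/-- The power-sum map `E : [0,1]^n → ℝ^n` is continuous and invariant
under permutations of the coordinates, and the induced map from the quotient of `[0,1]^n`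
by the symmetric-group action onto the image `E([0,1]^n) ⊆ ℝ^n` is a homeomorphism. -/
theorem powerSumMap_induces_homeomorph (n : ℕ) (hn : 1 ≤ n) :
    Continuous (fun x : unitCube n => powerSumMap n (x : Fin n → ℝ)) ∧
    (∀ (x : Fin n → ℝ) (σ : Equiv.Perm (Fin n)),
      powerSumMap n (x ∘ σ) = powerSumMap n x) ∧
    ∃ F : Quotient (permSetoid n) →
        Set.range (fun x : unitCube n => powerSumMap n (x : Fin n → ℝ)),
      (∀ x : unitCube n,
        (F (Quotient.mk (permSetoid n) x) : Fin n → ℝ) = powerSumMap n (x : Fin n → ℝ)) ∧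
      IsHomeomorph F := by
  have hcont : Continuous (fun x : unitCube n => powerSumMap n (x : Fin n → ℝ)) := by
    apply continuous_pi
    intro k
    exact continuous_finset_sum _ fun i _ =>
      ((continuous_apply i).comp continuous_subtype_val).pow _
  have hinv : ∀ (x : Fin n → ℝ) (σ : Equiv.Perm (Fin n)),
      powerSumMap n (x ∘ σ) = powerSumMap n x := by
    intro x σ
    funext k
    exact Equiv.sum_comp σ (fun i => x i ^ ((k : ℕ) + 1))
  refine ⟨hcont, hinv, ?_⟩
  -- the induced map
  set g : unitCube n → Set.range (fun x : unitCube n => powerSumMap n (x : Fin n → ℝ)) :=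
    fun x => ⟨powerSumMap n (x : Fin n → ℝ), ⟨x, rfl⟩⟩ with hg
  have hwd : ∀ a b : unitCube n, (permSetoid n).r a b → g a = g b := by
    rintro a b ⟨σ, h⟩
    apply Subtype.ext
    have : (b : Fin n → ℝ) = (a : Fin n → ℝ) ∘ σ := funext h
    simp only [hg, this, hinv]
  refine ⟨Quotient.lift g hwd, fun x => rfl, ?_⟩
  -- topology instances
  have hcompact : IsCompact (unitCube n) := by
    have : unitCube n = Set.pi Set.univ (fun _ : Fin n => Set.Icc (0:ℝ) 1) := by
      exact Set.ext fun x => ⟨fun h i _ => h i, fun h i => h i (Set.mem_univ i)⟩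
    rw [this]
    exact isCompact_univ_pi fun _ => isCompact_Icc
  have : CompactSpace (unitCube n) := isCompact_iff_compactSpace.mp hcompact
  rw [isHomeomorph_iff_continuous_bijective]
  constructor
  · exact Continuous.quotient_lift (by continuity) hwd
  constructor
  · -- injective
    rintro ⟨a⟩ ⟨b⟩ hab
    apply Quotient.sound
    have h : powerSumMap n (a : Fin n → ℝ) = powerSumMap n (b : Fin n → ℝ) :=
      congrArg Subtype.val hab
    have hp : ∀ k, 1 ≤ k → k ≤ n →
        ∑ i, (a : Fin n → ℝ) i ^ k = ∑ i, (b : Fin n → ℝ) i ^ k := by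
      intro k hk1 hk2
      have := congrFun h ⟨k - 1, by omega⟩
      simpa [powerSumMap, Nat.sub_add_cancel hk1] using this
    exact exists_perm_of_psum_eq n _ _ (esymm_eval_eq_of_psum_eq n _ _ hp)
  · -- surjective
    rintro ⟨v, x, rfl⟩
    exact ⟨Quotient.mk _ x, rfl⟩
end
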